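/- Let Q be a division ring with a discrete non-archimedean multiplicative valuation w taking values in {p^k : k ∈ Z} ∪ {0}. Then there exists a division ring extension Q ≤ Q' and an extension w' of w to a valuation on Q' such that Q' contains a central element z with w'(z) = p^{-1}. -/

import Mathlib

/-- A discrete non-archimedean multiplicative valuation on a division ring `Q`, with value
group contained in `{p^k : k ∈ ℤ} ∪ {0}`. -/
def IsDiscreteValuation (p : ℕ) {Q : Type} [DivisionRing Q] (w : Q → ℝ) : Prop :=
  (∀ q, w q = 0 ↔ q = 0) ∧ w 1 = 1 ∧ (∀ a b, w (a * b) = w a * w b) ∧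
    (∀ a b, w (a + b) ≤ max (w a) (w b)) ∧ (∀ q, q ≠ 0 → ∃ k : ℤ, w q = (p : ℝ) ^ k)

set_option linter.unusedSectionVars false

open Polynomial MulOpposite

section OreCondition

theorem rightOrePoly {K : Type*} [DivisionRing K] (f s : Polynomial K) (hs : s ≠ 0) :
    ∃ (g h : Polynomial K), g ≠ 0 ∧ f * g = s * h := by
  classical
  set σ : Polynomial K := s * C (s.leadingCoeff)⁻¹ with hσdef
  have hσ : σ.Monic := monic_mul_leadingCoeff_inv hs
  set n : ℕ := σ.natDegree with hn
  set ρ : Fin (n+1) → Polynomial K := fun i => (f * X ^ (i : ℕ)) %ₘ σ with hρ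
  set q : Fin (n+1) → Polynomial K := fun i => (f * X ^ (i : ℕ)) /ₘ σ with hq
  have hcoeff : ∀ (i : Fin (n+1)) (j : ℕ), n ≤ j → (ρ i).coeff j = 0 := by
    intro i j hj
    apply coeff_eq_zero_of_degree_lt
    calc (ρ i).degree < σ.degree := degree_modByMonic_lt _ hσ
    _ = (n : WithBot ℕ) := degree_eq_natDegree hσ.ne_zero
    _ ≤ (j : WithBot ℕ) := by exact_mod_cast Nat.cast_le.mpr hj
  set v : Fin (n+1) → (Fin n → Kᵐᵒᵖ) := fun i j => op ((ρ i).coeff j) with hv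
  have hnli : ¬ LinearIndependent Kᵐᵒᵖ v := by
    intro h
    have := h.fintype_card_le_finrank
    rw [Module.finrank_fin_fun] at this
    simp at this
  obtain ⟨c, hc, i₁, hi₁⟩ := Fintype.not_linearIndependent_iff.mp hnli
  set G : Polynomial K := ∑ i : Fin (n+1), monomial (i : ℕ) (unop (c i)) with hG
  have hGne : G ≠ 0 := by
    intro h0
    apply hi₁
    have hcoe : G.coeff (i₁ : ℕ) = unop (c i₁) := by
      rw [hG, finset_sum_coeff]
      rw [Finset.sum_eq_single i₁]
      · simp [coeff_monomial]
      · intro b _ hb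
        rw [coeff_monomial, if_neg (by simpa [Fin.val_eq_val] using hb)]
      · simp
    rw [h0, coeff_zero] at hcoe
    rw [← unop_eq_zero_iff]
    exact hcoe.symm
  refine ⟨G, C (s.leadingCoeff)⁻¹ * (∑ i : Fin (n+1), (q i) * C (unop (c i))),
    hGne, ?_⟩
  have key : ∑ i : Fin (n+1), (ρ i) * C (unop (c i)) = 0 := by
    ext j
    rw [finset_sum_coeff, coeff_zero]
    by_cases hj : j < n
    · have h1 := congrFun hc ⟨j, hj⟩
      rw [Finset.sum_apply] at h1
      simp only [hv, Pi.smul_apply, smul_eq_mul, Pi.zero_apply] at h1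
      have h2 : ∑ x : Fin (n+1), (ρ x).coeff j * unop (c x) = 0 := by
        apply_fun (opAddEquiv : K ≃+ Kᵐᵒᵖ)
        rw [map_sum, map_zero]
        rw [← h1]
        refine Finset.sum_congr rfl fun x _ => ?_
        simp [op_mul]
      simpa [coeff_mul_C] using h2
    · push_neg at hj
      rw [Finset.sum_eq_zero]
      intro i _
      rw [coeff_mul_C, hcoeff i j hj, zero_mul]
  have hfx : ∀ i : Fin (n+1), f * X ^ (i : ℕ) = ρ i + σ * q i :=
    fun i => (modByMonic_add_div _ σ).symm
  calc f * G = ∑ i : Fin (n+1), (f * X ^ (i : ℕ)) * C (unop (c i)) := by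
        rw [hG, Finset.mul_sum]
        refine Finset.sum_congr rfl fun i _ => ?_
        rw [← C_mul_X_pow_eq_monomial, ← X_pow_mul, ← mul_assoc]
    _ = ∑ i : Fin (n+1), (ρ i * C (unop (c i)) + σ * ((q i) * C (unop (c i)))) := by
        refine Finset.sum_congr rfl fun i _ => ?_
        rw [hfx i, add_mul, mul_assoc]
    _ = σ * ∑ i : Fin (n+1), (q i) * C (unop (c i)) := by
        rw [Finset.sum_add_distrib, key, zero_add, Finset.mul_sum]
    _ = s * (C (s.leadingCoeff)⁻¹ * (∑ i : Fin (n+1), (q i) * C (unop (c i)))) := by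
        rw [hσdef, mul_assoc]

theorem leftOrePoly {K : Type*} [DivisionRing K] (f s : Polynomial K) (hs : s ≠ 0) :
    ∃ (g h : Polynomial K), g ≠ 0 ∧ g * f = h * s := by
  have hs' : (opRingEquiv K) (op s) ≠ 0 := by
    simp only [ne_eq, EmbeddingLike.map_eq_zero_iff, op_eq_zero_iff]
    exact hs
  obtain ⟨g, h, hg, heq⟩ := rightOrePoly ((opRingEquiv K) (op f)) ((opRingEquiv K) (op s)) hs'
  refine ⟨unop ((opRingEquiv K).symm g), unop ((opRingEquiv K).symm h), ?_, ?_⟩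
  · simp only [ne_eq, unop_eq_zero_iff, EmbeddingLike.map_eq_zero_iff]
    exact hg
  · have := congrArg (opRingEquiv K).symm heq
    rw [map_mul, map_mul, RingEquiv.symm_apply_apply, RingEquiv.symm_apply_apply] at this
    have := congrArg unop this
    rw [unop_mul, unop_mul, unop_op, unop_op] at this
    exact this

end OreCondition

namespace ValExt

variable {p : ℕ} {Q : Type} [DivisionRing Q] {w : Q → ℝ}

section basic

variable (hw : IsDiscreteValuation p w) (hp : 1 < (p : ℝ))
include hw

theorem w_zero : w 0 = 0 := (hw.1 0).mpr rfl

include hp in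
theorem w_nonneg (q : Q) : 0 ≤ w q := by
  rcases eq_or_ne q 0 with h | h
  · rw [h, w_zero hw]
  · obtain ⟨k, hk⟩ := hw.2.2.2.2 q h
    rw [hk]
    positivity

include hp in
theorem w_pos {q : Q} (h : q ≠ 0) : 0 < w q := by
  obtain ⟨k, hk⟩ := hw.2.2.2.2 q h
  rw [hk]
  positivity

include hp in
theorem w_neg (q : Q) : w (-q) = w q := by
  have h1 : w (-1 : Q) * w (-1 : Q) = 1 := by
    rw [← hw.2.2.1]
    norm_num [hw.2.1]
  have h2 : (0:ℝ) ≤ w (-1 : Q) := w_nonneg hw hp _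
  have h3 : w (-1 : Q) = 1 := by nlinarith
  calc w (-q) = w ((-1) * q) := by rw [neg_one_mul]
  _ = w q := by rw [hw.2.2.1, h3, one_mul]

include hp in
theorem w_add_eq_left {a b : Q} (h : w b < w a) : w (a + b) = w a := by
  refine le_antisymm ((hw.2.2.2.1 a b).trans (max_le le_rfl h.le)) ?_
  have h2 : w a ≤ max (w (a + b)) (w b) := by
    calc w a = w ((a + b) + (-b)) := by rw [add_neg_cancel_right]
    _ ≤ max (w (a + b)) (w (-b)) := hw.2.2.2.1 _ _
    _ = max (w (a + b)) (w b) := by rw [w_neg hw hp]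
  rcases max_cases (w (a + b)) (w b) with ⟨he, _⟩ | ⟨he, _⟩
  · rwa [he] at h2
  · rw [he] at h2; exact absurd (lt_of_le_of_lt h2 h) (lt_irrefl _)

theorem w_sum_le {ι : Type*} (s : Finset ι) (F : ι → Q) {B : ℝ} (hB : 0 ≤ B)
    (h : ∀ i ∈ s, w (F i) ≤ B) : w (∑ i ∈ s, F i) ≤ B := by
  classical
  induction s using Finset.induction_on with
  | empty => simpa [w_zero hw] using hB
  | insert a s' hx ih =>
      rw [Finset.sum_insert hx]
      refine (hw.2.2.2.1 _ _).trans (max_le (h _ (Finset.mem_insert_self _ _)) ?_)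
      exact ih fun i hi => h i (Finset.mem_insert_of_mem hi)

theorem w_sum_lt {ι : Type*} (s : Finset ι) (F : ι → Q) {B : ℝ} (hB : 0 < B)
    (h : ∀ i ∈ s, w (F i) < B) : w (∑ i ∈ s, F i) < B := by
  classical
  induction s using Finset.induction_on with
  | empty => simpa [w_zero hw] using hB
  | insert a s' hx ih =>
      rw [Finset.sum_insert hx]
      refine lt_of_le_of_lt (hw.2.2.2.1 _ _) (max_lt (h _ (Finset.mem_insert_self _ _)) ?_)
      exact ih fun i hi => h i (Finset.mem_insert_of_mem hi)

end basic

/-- The Gauss valuation on polynomials. -/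
noncomputable def W (p : ℕ) (w : Q → ℝ) (f : Polynomial Q) : ℝ :=
  (Finset.range (f.natDegree + 1)).sup'
    (Finset.nonempty_range_iff.mpr (Nat.succ_ne_zero _))
    (fun i => w (f.coeff i) * (p : ℝ) ^ (-(i : ℤ)))

section gauss

variable (hw : IsDiscreteValuation p w) (hp : 1 < (p : ℝ))
include hw hp

theorem W_term_le (f : Polynomial Q) (i : ℕ) :
    w (f.coeff i) * (p : ℝ) ^ (-(i : ℤ)) ≤ W p w f := by
  have hP : (0:ℝ) < p := lt_trans one_pos hp
  unfold W
  rcases le_or_gt i f.natDegree with h | h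
  · exact Finset.le_sup' (fun i => w (f.coeff i) * (p : ℝ) ^ (-(i : ℤ)))
      (Finset.mem_range.mpr (Nat.lt_succ_of_le h))
  · rw [coeff_eq_zero_of_natDegree_lt h, w_zero hw, zero_mul]
    refine le_trans ?_ (Finset.le_sup' (fun i => w (f.coeff i) * (p : ℝ) ^ (-(i : ℤ)))
      (Finset.mem_range.mpr (Nat.succ_pos _)))
    have := w_nonneg hw hp (f.coeff 0)
    positivity

theorem W_nonneg (f : Polynomial Q) : 0 ≤ W p w f := by
  refine le_trans ?_ (W_term_le hw hp f 0)
  have := w_nonneg hw hp (f.coeff 0)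
  have hP : (0:ℝ) < p := lt_trans one_pos hp
  positivity

theorem W_zero : W p w (0 : Polynomial Q) = 0 := by
  simp [W, w_zero hw]

theorem W_pos {f : Polynomial Q} (hf : f ≠ 0) : 0 < W p w f := by
  have h1 : w (f.coeff f.natDegree) ≠ 0 := fun h => hf (by simpa using (hw.1 _).mp h)
  have h2 : 0 < w (f.coeff f.natDegree) := lt_of_le_of_ne (w_nonneg hw hp _) (Ne.symm h1)
  have hP : (0:ℝ) < p := lt_trans one_pos hp
  calc (0:ℝ) < w (f.coeff f.natDegree) * (p : ℝ) ^ (-(f.natDegree : ℤ)) := by positivity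
  _ ≤ W p w f := W_term_le hw hp f _

theorem W_C (a : Q) : W p w (C a) = w a := by
  simp [W, natDegree_C]

theorem W_one : W p w (1 : Polynomial Q) = 1 := by
  simpa [map_one] using (W_C hw hp (1 : Q)).trans hw.2.1

theorem W_X : W p w (X : Polynomial Q) = (p : ℝ)⁻¹ := by
  have hP : (0:ℝ) < p := lt_trans one_pos hp
  refine le_antisymm ?_ ?_
  · unfold W
    refine Finset.sup'_le _ _ ?_
    intro i hi
    rw [Finset.mem_range, natDegree_X] at hi
    interval_cases i
    · rw [coeff_X_zero, w_zero hw, zero_mul]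
      positivity
    · rw [coeff_X_one, hw.2.1, one_mul]
      norm_num
  · have h := W_term_le hw hp (X : Polynomial Q) 1
    rw [coeff_X_one, hw.2.1, one_mul] at h
    norm_num at h
    exact h

theorem W_add_le (f g : Polynomial Q) : W p w (f + g) ≤ max (W p w f) (W p w g) := by
  rw [show W p w (f + g) = (Finset.range ((f+g).natDegree + 1)).sup'
    (Finset.nonempty_range_iff.mpr (Nat.succ_ne_zero _))
    (fun i => w ((f+g).coeff i) * (p : ℝ) ^ (-(i : ℤ))) from rfl]
  refine Finset.sup'_le _ _ fun i _ => ?_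
  have hP : (0:ℝ) < p := lt_trans one_pos hp
  rw [coeff_add]
  calc w (f.coeff i + g.coeff i) * (p : ℝ) ^ (-(i : ℤ))
      ≤ max (w (f.coeff i)) (w (g.coeff i)) * (p : ℝ) ^ (-(i : ℤ)) :=
        mul_le_mul_of_nonneg_right (hw.2.2.2.1 _ _) (by positivity)
  _ = max (w (f.coeff i) * (p : ℝ) ^ (-(i : ℤ))) (w (g.coeff i) * (p : ℝ) ^ (-(i : ℤ))) :=
        max_mul_of_nonneg _ _ (by positivity)
  _ ≤ max (W p w f) (W p w g) :=
        max_le_max (W_term_le hw hp f i) (W_term_le hw hp g i)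

theorem W_argmax {f : Polynomial Q} (hf : f ≠ 0) :
    ∃ i₀ : ℕ, w (f.coeff i₀) * (p : ℝ) ^ (-(i₀ : ℤ)) = W p w f ∧
      ∀ i, i₀ < i → w (f.coeff i) * (p : ℝ) ^ (-(i : ℤ)) < W p w f := by
  classical
  set A := (Finset.range (f.natDegree + 1)).filter
    (fun i => w (f.coeff i) * (p : ℝ) ^ (-(i : ℤ)) = W p w f) with hA
  have hAne : A.Nonempty := by
    obtain ⟨b, hb, hbeq⟩ := Finset.exists_mem_eq_sup' (s := Finset.range (f.natDegree + 1))
      (Finset.nonempty_range_iff.mpr (Nat.succ_ne_zero _))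
      (fun i => w (f.coeff i) * (p : ℝ) ^ (-(i : ℤ)))
    exact ⟨b, Finset.mem_filter.mpr ⟨hb, hbeq.symm⟩⟩
  refine ⟨A.max' hAne, (Finset.mem_filter.mp (A.max'_mem hAne)).2, fun i hi => ?_⟩
  rcases le_or_gt i f.natDegree with h | h
  · have hne : w (f.coeff i) * (p : ℝ) ^ (-(i : ℤ)) ≠ W p w f := by
      intro heq
      have : i ∈ A := Finset.mem_filter.mpr ⟨Finset.mem_range.mpr (Nat.lt_succ_of_le h), heq⟩
      exact absurd (A.le_max' i this) (not_le.mpr hi)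
    exact lt_of_le_of_ne (W_term_le hw hp f i) hne
  · rw [coeff_eq_zero_of_natDegree_lt h, w_zero hw, zero_mul]
    exact W_pos hw hp hf

theorem W_mul (f g : Polynomial Q) : W p w (f * g) = W p w f * W p w g := by
  classical
  have hP : (0:ℝ) < p := lt_trans one_pos hp
  have hP0 : (p:ℝ) ≠ 0 := ne_of_gt hP
  rcases eq_or_ne f 0 with hf | hf
  · simp [hf, W_zero hw hp]
  rcases eq_or_ne g 0 with hg | hg
  · simp [hg, W_zero hw hp]
  have hWf := W_pos hw hp hf
  have hWg := W_pos hw hp hg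
  -- coefficient bound: w (f.coeff i) ≤ W f * p^i
  have key_le : ∀ (h : Polynomial Q) (i : ℕ), w (h.coeff i) ≤ W p w h * (p : ℝ) ^ (i : ℤ) := by
    intro h i
    have := mul_le_mul_of_nonneg_right (W_term_le hw hp h i) (le_of_lt (zpow_pos hP (i:ℤ)))
    rwa [mul_assoc, ← zpow_add₀ hP0, neg_add_cancel, zpow_zero, mul_one] at this
  refine le_antisymm ?_ ?_
  · rw [show W p w (f * g) = (Finset.range ((f*g).natDegree + 1)).sup'
      (Finset.nonempty_range_iff.mpr (Nat.succ_ne_zero _))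
      (fun i => w ((f*g).coeff i) * (p : ℝ) ^ (-(i : ℤ))) from rfl]
    refine Finset.sup'_le _ _ fun k _ => ?_
    have hB : 0 ≤ W p w f * W p w g * (p : ℝ) ^ (k : ℤ) := by positivity
    have hsum : w (∑ x ∈ Finset.HasAntidiagonal.antidiagonal k, f.coeff x.1 * g.coeff x.2)
        ≤ W p w f * W p w g * (p : ℝ) ^ (k : ℤ) := by
      refine w_sum_le hw _ _ hB fun x hx => ?_
      obtain hxk := Finset.HasAntidiagonal.mem_antidiagonal.mp hx
      rw [hw.2.2.1]
      calc w (f.coeff x.1) * w (g.coeff x.2)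
          ≤ (W p w f * (p : ℝ) ^ (x.1 : ℤ)) * (W p w g * (p : ℝ) ^ (x.2 : ℤ)) :=
            mul_le_mul (key_le f x.1) (key_le g x.2) (w_nonneg hw hp _) (by positivity)
      _ = W p w f * W p w g * (p : ℝ) ^ (k : ℤ) := by
            rw [← hxk]
            rw [show ((x.1 + x.2 : ℕ) : ℤ) = (x.1 : ℤ) + (x.2 : ℤ) by push_cast; ring]
            rw [zpow_add₀ hP0]
            ring
    calc w ((f * g).coeff k) * (p:ℝ) ^ (-(k:ℤ))
        ≤ (W p w f * W p w g * (p : ℝ) ^ (k : ℤ)) * (p:ℝ) ^ (-(k:ℤ)) := by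
          rw [coeff_mul]
          exact mul_le_mul_of_nonneg_right hsum (by positivity)
    _ = W p w f * W p w g := by
          rw [mul_assoc, ← zpow_add₀ hP0, add_neg_cancel, zpow_zero, mul_one]
  · obtain ⟨i₀, hi₀, hltf⟩ := W_argmax hw hp hf
    obtain ⟨j₀, hj₀, hltg⟩ := W_argmax hw hp hg
    set k₀ := i₀ + j₀ with hk₀
    set M := W p w f * W p w g * (p : ℝ) ^ (k₀ : ℤ) with hM
    have hMpos : 0 < M := by positivity
    have hwf : w (f.coeff i₀) = W p w f * (p:ℝ) ^ (i₀ : ℤ) := by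
      rw [← hi₀, mul_assoc, ← zpow_add₀ hP0, neg_add_cancel, zpow_zero, mul_one]
    have hwg : w (g.coeff j₀) = W p w g * (p:ℝ) ^ (j₀ : ℤ) := by
      rw [← hj₀, mul_assoc, ← zpow_add₀ hP0, neg_add_cancel, zpow_zero, mul_one]
    have hsplit : (f * g).coeff k₀ = f.coeff i₀ * g.coeff j₀ +
        ∑ x ∈ (Finset.HasAntidiagonal.antidiagonal k₀).erase (i₀, j₀), f.coeff x.1 * g.coeff x.2 := by
      rw [coeff_mul]
      exact (Finset.add_sum_erase _ _
        (Finset.HasAntidiagonal.mem_antidiagonal.mpr rfl : ((i₀, j₀) : ℕ × ℕ) ∈ Finset.HasAntidiagonal.antidiagonal k₀)).symm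
    have hmain : w (f.coeff i₀ * g.coeff j₀) = M := by
      rw [hw.2.2.1, hwf, hwg, hM]
      rw [show ((k₀ : ℕ) : ℤ) = (i₀ : ℤ) + (j₀ : ℤ) by rw [hk₀]; push_cast; ring]
      rw [zpow_add₀ hP0]
      ring
    have hrest : w (∑ x ∈ (Finset.HasAntidiagonal.antidiagonal k₀).erase (i₀, j₀),
        f.coeff x.1 * g.coeff x.2) < M := by
      refine w_sum_lt hw _ _ hMpos fun x hx => ?_
      obtain ⟨hne, hxk⟩ := Finset.mem_erase.mp hx
      have hxsum := Finset.HasAntidiagonal.mem_antidiagonal.mp hxk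
      have hPij : (p:ℝ) ^ (x.1 : ℤ) * (p:ℝ) ^ (x.2 : ℤ) = (p:ℝ) ^ (k₀ : ℤ) := by
        rw [← zpow_add₀ hP0]
        congr 1
        rw [← hxsum]; push_cast; ring
      rw [hw.2.2.1]
      have hcase : i₀ < x.1 ∨ j₀ < x.2 := by
        by_contra hcon
        push_neg at hcon
        have h1 : x.1 = i₀ ∧ x.2 = j₀ := by omega
        exact hne (Prod.ext h1.1 h1.2)
      have hb1 : w (f.coeff x.1) * (p:ℝ)^(-(x.1:ℤ)) ≤ W p w f := W_term_le hw hp f x.1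
      have hb2 : w (g.coeff x.2) * (p:ℝ)^(-(x.2:ℤ)) ≤ W p w g := W_term_le hw hp g x.2
      have key : w (f.coeff x.1) * w (g.coeff x.2) <
          (W p w f * (p:ℝ)^(x.1:ℤ)) * (W p w g * (p:ℝ)^(x.2:ℤ)) := by
        have e1 : w (f.coeff x.1) ≤ W p w f * (p:ℝ)^(x.1:ℤ) := key_le f x.1
        have e2 : w (g.coeff x.2) ≤ W p w g * (p:ℝ)^(x.2:ℤ) := key_le g x.2
        have n1 : 0 ≤ w (f.coeff x.1) := w_nonneg hw hp _
        have n2 : 0 ≤ w (g.coeff x.2) := w_nonneg hw hp _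
        rcases hcase with hc | hc
        · have s1 : w (f.coeff x.1) < W p w f * (p:ℝ)^(x.1:ℤ) := by
            have := mul_lt_mul_of_pos_right (hltf x.1 hc) (zpow_pos hP (x.1:ℤ))
            rwa [mul_assoc, ← zpow_add₀ hP0, neg_add_cancel, zpow_zero, mul_one] at this
          calc w (f.coeff x.1) * w (g.coeff x.2)
              ≤ w (f.coeff x.1) * (W p w g * (p:ℝ)^(x.2:ℤ)) :=
                mul_le_mul_of_nonneg_left e2 n1
          _ < (W p w f * (p:ℝ)^(x.1:ℤ)) * (W p w g * (p:ℝ)^(x.2:ℤ)) :=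
                mul_lt_mul_of_pos_right s1 (by positivity)
        · have s2 : w (g.coeff x.2) < W p w g * (p:ℝ)^(x.2:ℤ) := by
            have := mul_lt_mul_of_pos_right (hltg x.2 hc) (zpow_pos hP (x.2:ℤ))
            rwa [mul_assoc, ← zpow_add₀ hP0, neg_add_cancel, zpow_zero, mul_one] at this
          calc w (f.coeff x.1) * w (g.coeff x.2)
              ≤ (W p w f * (p:ℝ)^(x.1:ℤ)) * w (g.coeff x.2) :=
                mul_le_mul_of_nonneg_right e1 n2
          _ < (W p w f * (p:ℝ)^(x.1:ℤ)) * (W p w g * (p:ℝ)^(x.2:ℤ)) :=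
                mul_lt_mul_of_pos_left s2 (by positivity)
      calc w (f.coeff x.1) * w (g.coeff x.2)
          < (W p w f * (p:ℝ)^(x.1:ℤ)) * (W p w g * (p:ℝ)^(x.2:ℤ)) := key
      _ = M := by rw [hM, ← hPij]; ring
    have hco : w ((f * g).coeff k₀) = M := by
      rw [hsplit]
      rw [w_add_eq_left hw hp (by rw [hmain]; exact hrest)]
      exact hmain
    have := W_term_le hw hp (f * g) k₀
    rw [hco] at this
    have hMk : M * (p:ℝ) ^ (-(k₀:ℤ)) = W p w f * W p w g := by
      rw [hM, mul_assoc, ← zpow_add₀ hP0, add_neg_cancel, zpow_zero, mul_one]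
    rwa [hMk] at this

theorem W_zpow {f : Polynomial Q} (hf : f ≠ 0) : ∃ k : ℤ, W p w f = (p : ℝ) ^ k := by
  have hP : (0:ℝ) < p := lt_trans one_pos hp
  have hP0 : (p:ℝ) ≠ 0 := ne_of_gt hP
  obtain ⟨b, hb, hbeq⟩ := Finset.exists_mem_eq_sup' (s := Finset.range (f.natDegree + 1))
    (Finset.nonempty_range_iff.mpr (Nat.succ_ne_zero _))
    (fun i => w (f.coeff i) * (p : ℝ) ^ (-(i : ℤ)))
  have hbW : W p w f = w (f.coeff b) * (p : ℝ) ^ (-(b : ℤ)) := hbeq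
  have hcb : f.coeff b ≠ 0 := by
    intro h0
    have := W_pos hw hp hf
    rw [hbW, h0, w_zero hw, zero_mul] at this
    exact lt_irrefl _ this
  obtain ⟨k, hk⟩ := hw.2.2.2.2 _ hcb
  exact ⟨k - b, by rw [hbW, hk, ← zpow_add₀ hP0]; ring_nf⟩

end gauss

end ValExt


open ValExt in
open scoped nonZeroDivisors in
/-- Let `Q` be a division ring with a discrete non-archimedean multiplicative valuation `w`
taking values in `{p^k : k ∈ ℤ} ∪ {0}`.  Then there exists a division ring extension
`Q ≤ Q'` and an extension `w'` of `w` to a valuation on `Q'` such that `Q'` contains a central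
element `z` with `w' z = p⁻¹`. -/
theorem valuation_extension_central_uniformizer (p : ℕ) [Fact p.Prime] {Q : Type}
    [DivisionRing Q] (w : Q → ℝ) (hw : IsDiscreteValuation p w) :
    ∃ (Q' : Type) (_ : DivisionRing Q') (j : Q →+* Q') (w' : Q' → ℝ),
      Function.Injective j ∧ IsDiscreteValuation p w' ∧ (∀ q, w' (j q) = w q) ∧
      ∃ z : Q', (∀ x : Q', z * x = x * z) ∧ w' z = (p : ℝ)⁻¹ := by
  classical
  have hp1 : 1 < (p : ℝ) := by exact_mod_cast (Fact.out : p.Prime).one_lt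
  have hP : (0:ℝ) < p := lt_trans one_pos hp1
  have hP0 : (p:ℝ) ≠ 0 := ne_of_gt hP
  letI : OreLocalization.OreSet (Polynomial Q)⁰ := Classical.choice <| by
    rw [OreLocalization.nonempty_oreSet_iff_of_noZeroDivisors]
    intro r s
    obtain ⟨g, h, hg, heq⟩ := leftOrePoly r (s : Polynomial Q) (nonZeroDivisors.coe_ne_zero s)
    exact ⟨h, ⟨g, mem_nonZeroDivisors_of_ne_zero hg⟩, heq⟩
  set Q' := OreLocalization (Polynomial Q)⁰ (Polynomial Q) with hQ'def
  have hWpos : ∀ s : (Polynomial Q)⁰, 0 < W p w (s : Polynomial Q) :=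
    fun s => W_pos hw hp1 (nonZeroDivisors.coe_ne_zero s)
  -- the extended valuation
  set w' : Q' → ℝ := OreLocalization.liftExpand
      (fun (r : Polynomial Q) (s : (Polynomial Q)⁰) => W p w r / W p w (s : Polynomial Q))
      (by
        intro r t s ht
        have htne : t ≠ 0 := by
          rintro rfl
          rw [zero_mul] at ht
          exact nonZeroDivisors.coe_ne_zero ⟨0, ht⟩ rfl
        have hWt : 0 < W p w t := W_pos hw hp1 htne
        show W p w r / W p w (s : Polynomial Q) = W p w (t * r) / W p w (t * (s : Polynomial Q))
        rw [W_mul hw hp1, W_mul hw hp1, mul_div_mul_left _ _ (ne_of_gt hWt)]) with hw'def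
  have w'_div : ∀ (r : Polynomial Q) (s : (Polynomial Q)⁰),
      w' (r /ₒ s) = W p w r / W p w (s : Polynomial Q) :=
    fun r s => OreLocalization.liftExpand_of r s
  have exists_rep : ∀ x : Q', ∃ (r : Polynomial Q) (s : (Polynomial Q)⁰), x = r /ₒ s :=
    fun x => OreLocalization.ind (fun r s => ⟨r, s, rfl⟩) x
  -- zero characterization
  have hzero : ∀ (r : Polynomial Q) (s : (Polynomial Q)⁰), (r /ₒ s : Q') = 0 ↔ r = 0 := by
    intro r s
    constructor
    · intro h
      rw [OreLocalization.zero_def, OreLocalization.oreDiv_eq_iff] at h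
      obtain ⟨u, v, h1, h2⟩ := h
      simp only [Submonoid.smul_def, smul_eq_mul, mul_zero, smul_zero] at h1
      have h2' : (u : Polynomial Q) * 1 = v * (s : Polynomial Q) := by exact_mod_cast h2
      have hv : v ≠ 0 := by
        rintro rfl
        rw [zero_mul] at h2'
        exact nonZeroDivisors.coe_ne_zero u (by simpa using h2')
      have : v * r = 0 := h1.symm
      rcases mul_eq_zero.mp this with h' | h'
      · exact absurd h' hv
      · exact h'
    · rintro rfl
      exact OreLocalization.zero_oreDiv' s
  have hw'zero : ∀ x : Q', w' x = 0 ↔ x = 0 := by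
    intro x
    obtain ⟨r, s, rfl⟩ := exists_rep x
    rw [w'_div, hzero r s]
    rw [_root_.div_eq_zero_iff]
    constructor
    · rintro (h | h)
      · rcases eq_or_ne r 0 with h' | h'
        · exact h'
        · exact absurd h (ne_of_gt (W_pos hw hp1 h'))
      · exact absurd h (ne_of_gt (hWpos s))
    · rintro rfl
      exact Or.inl (W_zero hw hp1)
  set j : Q →+* Q' :=
    (OreLocalization.numeratorRingHom).comp (C : Q →+* Polynomial Q) with hjdef
  have hj_apply : ∀ q : Q, j q = ((C q : Polynomial Q) /ₒ (1 : (Polynomial Q)⁰) : Q') := by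
    intro q
    rw [hjdef, RingHom.comp_apply]
    exact OreLocalization.numeratorHom_apply
  refine ⟨Q', inferInstance, j, w', ?_, ?_, ?_, ?_⟩
  · -- injectivity
    intro a b hab
    have h0 : j (a - b) = 0 := by
      rw [map_sub, hab, sub_self]
    rw [hj_apply] at h0
    have := (hzero _ _).mp h0
    have : a - b = 0 := by
      have hC : Function.Injective (C : Q →+* Polynomial Q) := C_injective
      exact hC (by simpa using this)
    exact sub_eq_zero.mp this
  · -- IsDiscreteValuation p w'
    refine ⟨hw'zero, ?_, ?_, ?_, ?_⟩
    · rw [OreLocalization.one_def, w'_div]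
      simp [W_one hw hp1]
    · intro a b
      obtain ⟨r₁, s₁, rfl⟩ := exists_rep a
      obtain ⟨r₂, s₂, rfl⟩ := exists_rep b
      rcases OreLocalization.oreDivMulChar' r₁ r₂ s₁ s₂ with ⟨ra, sa, ha, ha'⟩
      rw [ha', w'_div, w'_div, w'_div]
      have hWa : W p w (sa : Polynomial Q) * W p w r₁ = W p w ra * W p w (s₂ : Polynomial Q) := by
        rw [← W_mul hw hp1, ← W_mul hw hp1, ha]
      rw [Submonoid.coe_mul, W_mul hw hp1, W_mul hw hp1, div_mul_div_comm]
      rw [div_eq_div_iff (ne_of_gt (mul_pos (hWpos sa) (hWpos s₁)))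
        (ne_of_gt (mul_pos (hWpos s₁) (hWpos s₂)))]
      linear_combination (-(W p w r₂ * W p w (s₁ : Polynomial Q))) * hWa
    · -- ultrametric inequality
      intro a b
      obtain ⟨r₁, s₁, rfl⟩ := exists_rep a
      obtain ⟨r₂, s₂, rfl⟩ := exists_rep b
      rcases OreLocalization.oreDivAddChar' r₁ r₂ s₁ s₂ with ⟨rb, sb, hb, hb'⟩
      have hrepr : (sb • r₁ + rb • r₂ : Polynomial Q) = (sb : Polynomial Q) * r₁ + rb * r₂ := by
        rw [Submonoid.smul_def, smul_eq_mul, smul_eq_mul]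
      rw [hb', hrepr, w'_div, w'_div, w'_div]
      have hrb : rb ≠ 0 := by
        rintro rfl
        rw [zero_mul] at hb
        exact nonZeroDivisors.coe_ne_zero (sb * s₁) (by rw [Submonoid.coe_mul]; exact hb)
      have hden : W p w ((sb * s₁ : (Polynomial Q)⁰) : Polynomial Q) =
          W p w (sb : Polynomial Q) * W p w (s₁ : Polynomial Q) := by
        rw [Submonoid.coe_mul, W_mul hw hp1]
      have hden2 : W p w (sb : Polynomial Q) * W p w (s₁ : Polynomial Q) =
          W p w rb * W p w (s₂ : Polynomial Q) := by
        rw [← W_mul hw hp1, ← W_mul hw hp1, hb]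
      have hnum : W p w ((sb : Polynomial Q) * r₁ + rb * r₂) ≤
          max (W p w (sb : Polynomial Q) * W p w r₁) (W p w rb * W p w r₂) := by
        refine (W_add_le hw hp1 _ _).trans ?_
        rw [W_mul hw hp1, W_mul hw hp1]
      have hsb : 0 < W p w (sb : Polynomial Q) := hWpos sb
      have hs₁ : 0 < W p w (s₁ : Polynomial Q) := hWpos s₁
      have hs₂ : 0 < W p w (s₂ : Polynomial Q) := hWpos s₂
      have hrbW : 0 < W p w rb := W_pos hw hp1 hrb
      calc W p w ((sb : Polynomial Q) * r₁ + rb * r₂) /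
            W p w ((sb * s₁ : (Polynomial Q)⁰) : Polynomial Q)
          ≤ max (W p w (sb : Polynomial Q) * W p w r₁) (W p w rb * W p w r₂) /
            (W p w (sb : Polynomial Q) * W p w (s₁ : Polynomial Q)) := by
            rw [hden]
            exact (div_le_div_iff_of_pos_right (by positivity)).mpr hnum
      _ = max (W p w (sb : Polynomial Q) * W p w r₁ /
              (W p w (sb : Polynomial Q) * W p w (s₁ : Polynomial Q)))
            (W p w rb * W p w r₂ /
              (W p w (sb : Polynomial Q) * W p w (s₁ : Polynomial Q))) := by
            rw [max_div_div_right (by positivity)]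
      _ = max (W p w r₁ / W p w (s₁ : Polynomial Q)) (W p w r₂ / W p w (s₂ : Polynomial Q)) := by
            congr 1
            · rw [mul_div_mul_left _ _ (ne_of_gt hsb)]
            · rw [hden2, mul_div_mul_left _ _ (ne_of_gt hrbW)]
    · -- discreteness
      intro x hx
      obtain ⟨r, s, rfl⟩ := exists_rep x
      have hr : r ≠ 0 := fun h0 => hx ((hzero r s).mpr h0)
      obtain ⟨k, hk⟩ := W_zpow hw hp1 hr
      obtain ⟨l, hl⟩ := W_zpow hw hp1 (nonZeroDivisors.coe_ne_zero s)
      exact ⟨k - l, by rw [w'_div, hk, hl, ← zpow_sub₀ hP0]⟩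
  · -- extension of w
    intro q
    rw [hj_apply, w'_div, OneMemClass.coe_one, W_one hw hp1, div_one, W_C hw hp1]
  · -- the central uniformizer
    refine ⟨((X : Polynomial Q) /ₒ (1 : (Polynomial Q)⁰) : Q'), ?_, ?_⟩
    · intro x
      obtain ⟨r, s, rfl⟩ := exists_rep x
      rw [OreLocalization.oreDiv_mul_char (X : Polynomial Q) r 1 s X s (X_mul).symm]
      rw [OreLocalization.oreDiv_mul_char r (X : Polynomial Q) s 1 r 1 (by simp)]
      rw [X_mul, mul_one, one_mul]
    · rw [w'_div, OneMemClass.coe_one, W_one hw hp1, div_one, W_X hw hp1]
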